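/- Explicit KKT solution formulas for the MPQP (derivation step of Theorem 1(2)): Let H be a real symmetric positive definite n×n matrix, A a real m×n matrix, E a real m×p matrix, b ∈ ℝᵐ, θ ∈ ℝᵖ. Let I ⊆ {1,…,m} be an index set, let Ã, Ẽ, b̃ denote the submatrices/subvector of A, E, b formed by the rows in I, and assume the rows of Ã are linearly independent. Suppose x ∈ ℝⁿ and y ∈ ℝᵐ satisfy H x + Aᵀ y = 0, yᵢ = 0 for every i ∉ I, and à x = b̃ + Ẽ θ. Then the restriction ỹ of y to the indices in I equals −(à H⁻¹ Ãᵀ)⁻¹ (b̃ + Ẽ θ), and x = H⁻¹ Ãᵀ (à H⁻¹ Ãᵀ)⁻¹ (b̃ + Ẽ θ). -/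

import Mathlib

open Matrix

/-- Explicit KKT solution formulas for the MPQP (derivation step of
Theorem 1(2)).  The active index set is `I = Set.range σ`; `At, Et, bt` are
the rows of `A, E, b` in `I`, assumed linearly independent.  If `(x, y)`
satisfies stationarity, `y` vanishes off `I`, and the active constraints hold
with equality, then the restriction of `y` to `I` and `x` are given by the
explicit affine formulas in `θ`. -/
theorem mpqp_kkt_solution_formulas {m n p k : ℕ}
    (H : Matrix (Fin n) (Fin n) ℝ)
    (hHsym : Hᵀ = H)
    (hHpd : ∀ v : Fin n → ℝ, v ≠ 0 → 0 < v ⬝ᵥ H.mulVec v)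
    (A : Matrix (Fin m) (Fin n) ℝ) (E : Matrix (Fin m) (Fin p) ℝ) (b : Fin m → ℝ)
    (θ : Fin p → ℝ)
    (σ : Fin k → Fin m) (hσ : Function.Injective σ)
    (At : Matrix (Fin k) (Fin n) ℝ) (Et : Matrix (Fin k) (Fin p) ℝ) (bt : Fin k → ℝ)
    (hAt : At = A.submatrix σ id) (hEt : Et = E.submatrix σ id) (hbt : bt = b ∘ σ)
    (hrows : LinearIndependent ℝ (fun i : Fin k => At i))
    (x : Fin n → ℝ) (y : Fin m → ℝ)
    (hstat : H.mulVec x + Aᵀ.mulVec y = 0)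
    (hsupp : ∀ i : Fin m, i ∉ Set.range σ → y i = 0)
    (hactive : At.mulVec x = bt + Et.mulVec θ) :
    (fun i : Fin k => y (σ i)) = -((At * H⁻¹ * Atᵀ)⁻¹.mulVec (bt + Et.mulVec θ)) ∧
    x = (H⁻¹ * Atᵀ * (At * H⁻¹ * Atᵀ)⁻¹).mulVec (bt + Et.mulVec θ) := by
  classical
  set yt : Fin k → ℝ := fun i => y (σ i) with hyt
  -- H is positive definite
  have hHpd' : H.PosDef := by
    refine Matrix.posDef_iff_dotProduct_mulVec.mpr ⟨?_, fun v hv => ?_⟩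
    · simpa [Matrix.IsHermitian] using hHsym
    · simpa using hHpd v hv
  have hHdet : IsUnit H.det := (Matrix.isUnit_iff_isUnit_det _).1 hHpd'.isUnit
  have hHinvpd : H⁻¹.PosDef := hHpd'.inv
  -- vecMul with At is injective
  have hinj : Function.Injective At.vecMul := Matrix.vecMul_injective_iff.2 hrows
  have hHit : (H⁻¹)ᵀ = H⁻¹ := by rw [Matrix.transpose_nonsing_inv, hHsym]
  -- M := At * H⁻¹ * Atᵀ is positive definite
  have hMpd : (At * H⁻¹ * Atᵀ).PosDef := by
    refine Matrix.posDef_iff_dotProduct_mulVec.mpr ⟨?_, fun v hv => ?_⟩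
    · show (At * H⁻¹ * Atᵀ)ᴴ = _
      simp [Matrix.conjTranspose_mul, hHit, Matrix.mul_assoc]
    · have hv' : Atᵀ.mulVec v ≠ 0 := by
        rw [Matrix.mulVec_transpose]
        intro h0
        exact hv (hinj (by simpa using h0))
      have key : star v ⬝ᵥ ((At * H⁻¹ * Atᵀ) *ᵥ v)
          = star (Atᵀ *ᵥ v) ⬝ᵥ (H⁻¹ *ᵥ (Atᵀ *ᵥ v)) := by
        simp only [star_trivial, ← Matrix.mulVec_mulVec]
        rw [Matrix.dotProduct_mulVec, ← Matrix.mulVec_transpose]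
      rw [key]
      exact hHinvpd.dotProduct_mulVec_pos hv'
  have hMdet : IsUnit (At * H⁻¹ * Atᵀ).det :=
    (Matrix.isUnit_iff_isUnit_det _).1 hMpd.isUnit
  -- Aᵀ *ᵥ y = Atᵀ *ᵥ yt
  have hAy : Aᵀ.mulVec y = Atᵀ.mulVec yt := by
    funext j
    have hsum : ∑ i : Fin m, A i j * y i = ∑ i : Fin k, A (σ i) j * y (σ i) := by
      have himg : ∑ i ∈ Finset.univ.image σ, A i j * y i
          = ∑ i : Fin k, A (σ i) j * y (σ i) :=
        Finset.sum_image (fun a _ b _ h => hσ h)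
      rw [← himg]
      refine (Finset.sum_subset (Finset.subset_univ _) fun i _ hi => ?_).symm
      have hnr : i ∉ Set.range σ := fun ⟨a, ha⟩ =>
        hi (Finset.mem_image.2 ⟨a, Finset.mem_univ _, ha⟩)
      simp [hsupp i hnr]
    simpa [Matrix.mulVec, dotProduct, Matrix.transpose_apply, hAt, hyt,
      Matrix.submatrix_apply] using hsum
  -- x = - H⁻¹ Atᵀ yt
  have hx : x = -(H⁻¹ * Atᵀ).mulVec yt := by
    have h1 : H.mulVec x = -(Atᵀ.mulVec yt) := by
      rw [← hAy, eq_neg_iff_add_eq_zero]; exact hstat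
    have h2 := congrArg H⁻¹.mulVec h1
    rwa [Matrix.mulVec_mulVec, Matrix.nonsing_inv_mul _ hHdet, Matrix.one_mulVec,
      Matrix.mulVec_neg, Matrix.mulVec_mulVec] at h2
  -- plug into active constraints
  have hM : (At * H⁻¹ * Atᵀ).mulVec yt = -(bt + Et.mulVec θ) := by
    have h3 := hactive
    rw [hx, Matrix.mulVec_neg, Matrix.mulVec_mulVec] at h3
    rw [Matrix.mul_assoc, ← h3, neg_neg]
  have hyt' : yt = -((At * H⁻¹ * Atᵀ)⁻¹.mulVec (bt + Et.mulVec θ)) := by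
    have h4 := congrArg (At * H⁻¹ * Atᵀ)⁻¹.mulVec hM
    rwa [Matrix.mulVec_mulVec, Matrix.nonsing_inv_mul _ hMdet, Matrix.one_mulVec,
      Matrix.mulVec_neg] at h4
  refine ⟨hyt', ?_⟩
  rw [hx, hyt', Matrix.mulVec_neg, neg_neg, Matrix.mulVec_mulVec, Matrix.mul_assoc]
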